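/- arXiv:1604.00436 — 3 statements merged into one kernel-verified Lean document; each statement's English description precedes it below -/
import Mathlib

section
/- Let q be a prime with q ≥ 7, and let f(s) = s² − s + 1 over F_q. Let S = {s ∈ F_q \ {0,1} : f(s) is a nonzero square in F_q}. Then |S| = (q−7)/2 if −3 is a square in F_q, and |S| = (q−5)/2 if −3 is a nonsquare in F_q. -/
open Finset

open scoped Classical in
lemma my_conic_card (q : ℕ) [Fact q.Prime] (hq7 : 7 ≤ q) :
    (Finset.univ.filter fun p : ZMod q × ZMod q => p.2 ^ 2 = p.1 ^ 2 - p.1 + 1).card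
      = q - 1 := by
  have hnat : ∀ n : ℕ, 0 < n → n ≤ 6 → (n : ZMod q) ≠ 0 := by
    intro n hn hn6
    rw [Ne, ZMod.natCast_eq_zero_iff]
    intro h
    have := Nat.le_of_dvd hn h
    omega
  have h2 : (2 : ZMod q) ≠ 0 := by have := hnat 2 (by norm_num) (by norm_num); push_cast at this; exact this
  have h3 : (3 : ZMod q) ≠ 0 := by have := hnat 3 (by norm_num) (by norm_num); push_cast at this; exact this
  have h4 : (4 : ZMod q) ≠ 0 := by have := hnat 4 (by norm_num) (by norm_num); push_cast at this; exact this
  rw [show q - 1 = (Finset.univ.filter fun a : ZMod q => a ≠ 0).card by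
    rw [Finset.filter_ne', Finset.card_erase_of_mem (mem_univ 0), Finset.card_univ, ZMod.card]]
  symm
  apply Finset.card_bij (fun a _ => (((a - 3*a⁻¹ + 2)/4 : ZMod q), (-(a + 3*a⁻¹)/4 : ZMod q)))
  · intro a ha
    simp only [mem_filter, mem_univ, true_and] at ha ⊢
    field_simp
    ring
  · intro a ha b hb h
    simp only [mem_filter, mem_univ, true_and] at ha hb
    have key : ∀ c : ZMod q, c ≠ 0 →
        2 * ((c - 3*c⁻¹ + 2)/4) - 1 - 2 * (-(c + 3*c⁻¹)/4) = c := by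
      intro c hc; field_simp; ring
    rw [Prod.mk.injEq] at h
    obtain ⟨h1, h2'⟩ := h
    calc a = 2 * ((a - 3*a⁻¹ + 2)/4) - 1 - 2 * (-(a + 3*a⁻¹)/4) := (key a ha).symm
    _ = 2 * ((b - 3*b⁻¹ + 2)/4) - 1 - 2 * (-(b + 3*b⁻¹)/4) := by rw [h1, h2']
    _ = b := key b hb
  · rintro ⟨s, y⟩ hp
    simp only [mem_filter, mem_univ, true_and] at hp
    have ha : (2*s - 1 - 2*y : ZMod q) ≠ 0 := by
      intro h0
      exact h3 (by linear_combination (-(2*s-1+2*y))*h0 - 4*hp)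
    refine ⟨2*s - 1 - 2*y, by simp [ha], ?_⟩
    rw [Prod.mk.injEq]
    constructor
    · field_simp
      linear_combination 4*hp
    · field_simp
      linear_combination 4*hp

open scoped Classical in
lemma my_fiber_sum (q : ℕ) [Fact q.Prime] :
    (Finset.univ.filter fun p : ZMod q × ZMod q => p.2 ^ 2 = p.1 ^ 2 - p.1 + 1).card
      = ∑ s : ZMod q, (Finset.univ.filter fun y : ZMod q => y ^ 2 = s ^ 2 - s + 1).card := by
  rw [Finset.card_eq_sum_card_fiberwise (f := Prod.fst) (t := Finset.univ) (fun p _ => mem_univ _)]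
  refine Finset.sum_congr rfl fun s _ => ?_
  apply Finset.card_bij (fun p _ => p.2)
  · intro p hp
    simp only [mem_filter, mem_univ, true_and] at hp ⊢
    rw [← hp.2]
    exact hp.1
  · intro p hp p' hp' h
    simp only [mem_filter, mem_univ, true_and] at hp hp'
    exact Prod.ext (hp.2.trans hp'.2.symm) h
  · intro y hy
    simp only [mem_filter, mem_univ, true_and] at hy
    exact ⟨(s, y), by simp [hy], rfl⟩

open scoped Classical in
lemma my_fiber_card (q : ℕ) [Fact q.Prime] (hq7 : 7 ≤ q) (c : ZMod q) :
    (Finset.univ.filter fun y : ZMod q => y ^ 2 = c).card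
      = if c = 0 then 1 else if IsSquare c then 2 else 0 := by
  have h2 : (2 : ZMod q) ≠ 0 := by
    rw [show (2 : ZMod q) = ((2:ℕ) : ZMod q) by push_cast; ring, Ne,
      ZMod.natCast_eq_zero_iff]
    intro h; have := Nat.le_of_dvd (by norm_num) h; omega
  split_ifs with h0 hsq
  · subst h0
    rw [show (Finset.univ.filter fun y : ZMod q => y ^ 2 = 0) = {0} by
      ext y; simp [pow_eq_zero_iff]]
    simp
  · obtain ⟨r, hr⟩ := hsq
    have hr0 : r ≠ 0 := by rintro rfl; simp at hr; exact h0 hr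
    rw [show (Finset.univ.filter fun y : ZMod q => y ^ 2 = c) = {r, -r} by
      ext y
      simp only [mem_filter, mem_univ, true_and, mem_insert, mem_singleton]
      constructor
      · intro h
        have hm : (y - r) * (y + r) = 0 := by linear_combination h + hr
        rcases mul_eq_zero.mp hm with h | h
        · exact Or.inl (sub_eq_zero.mp h)
        · exact Or.inr (eq_neg_of_add_eq_zero_left h)
      · rintro (rfl | rfl) <;> [linear_combination -hr; linear_combination -hr]]
    rw [Finset.card_pair]
    intro h
    apply hr0
    have : (2 : ZMod q) * r = 0 := by linear_combination h
    exact (mul_eq_zero.mp this).resolve_left h2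
  · rw [Finset.card_eq_zero, Finset.filter_eq_empty_iff]
    intro y _ h
    exact hsq ⟨y, by linear_combination -h⟩

open scoped Classical in
lemma my_zero_card (q : ℕ) [Fact q.Prime] (hq7 : 7 ≤ q) :
    (Finset.univ.filter fun s : ZMod q => s ^ 2 - s + 1 = 0).card
      = if IsSquare (-3 : ZMod q) then 2 else 0 := by
  have hnat : ∀ n : ℕ, 0 < n → n ≤ 6 → (n : ZMod q) ≠ 0 := by
    intro n hn hn6
    rw [Ne, ZMod.natCast_eq_zero_iff]
    intro h; have := Nat.le_of_dvd hn h; omega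
  have h2 : (2 : ZMod q) ≠ 0 := by have := hnat 2 (by norm_num) (by norm_num); push_cast at this; exact this
  have h3 : (3 : ZMod q) ≠ 0 := by have := hnat 3 (by norm_num) (by norm_num); push_cast at this; exact this
  have h4 : (4 : ZMod q) ≠ 0 := by have := hnat 4 (by norm_num) (by norm_num); push_cast at this; exact this
  split_ifs with hsq
  · obtain ⟨r, hr⟩ := hsq
    have hr0 : r ≠ 0 := by
      rintro rfl
      rw [mul_zero] at hr
      exact h3 (by linear_combination -hr)
    rw [show (Finset.univ.filter fun s : ZMod q => s ^ 2 - s + 1 = 0)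
        = {(1 + r)/2, (1 - r)/2} by
      ext s
      simp only [mem_filter, mem_univ, true_and, mem_insert, mem_singleton]
      constructor
      · intro h
        have hm : (s - (1 + r)/2) * (s - (1 - r)/2) = 0 := by
          field_simp
          linear_combination 4*h + hr
        rcases mul_eq_zero.mp hm with h' | h'
        · exact Or.inl (sub_eq_zero.mp h')
        · exact Or.inr (sub_eq_zero.mp h')
      · rintro (rfl | rfl)
        · field_simp
          linear_combination -hr
        · field_simp
          linear_combination -hr]
    rw [Finset.card_pair]
    intro h
    apply hr0
    have : (1 + r)/2 - (1 - r)/2 = 0 := by rw [h]; ring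
    have h2r : (2:ZMod q) * r = 0 := by
      field_simp at this
      linear_combination this
    exact (mul_eq_zero.mp h2r).resolve_left h2
  · rw [Finset.card_eq_zero, Finset.filter_eq_empty_iff]
    intro s _ h
    exact hsq ⟨2*s - 1, by linear_combination -4*h⟩

open scoped Classical in
/-- For a prime `q ≥ 7`, the number of `s ∈ F_q \ {0,1}` such that `s² - s + 1` is a
nonzero square is `(q-7)/2` if `-3` is a square in `F_q`, and `(q-5)/2` otherwise. -/
theorem stmt2 (q : ℕ) [Fact q.Prime] (hq7 : 7 ≤ q) :
    (Finset.univ.filter fun s : ZMod q =>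
        s ≠ 0 ∧ s ≠ 1 ∧ s ^ 2 - s + 1 ≠ 0 ∧ IsSquare (s ^ 2 - s + 1)).card =
      if IsSquare (-3 : ZMod q) then (q - 7) / 2 else (q - 5) / 2 := by
  have h10 : (1 : ZMod q) ≠ 0 := by
    have : Nat.Prime q := Fact.out
    have : (1 : ZMod q) ≠ 0 := one_ne_zero
    exact this
  set N2 := (Finset.univ.filter fun s : ZMod q =>
      s ^ 2 - s + 1 ≠ 0 ∧ IsSquare (s ^ 2 - s + 1)).card with hN2def
  -- key sum identity
  have key : (q : ℕ) - 1
      = (Finset.univ.filter fun s : ZMod q => s ^ 2 - s + 1 = 0).card + 2 * N2 := by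
    rw [← my_conic_card q hq7, my_fiber_sum q]
    rw [← Finset.sum_filter_add_sum_filter_not Finset.univ (fun s : ZMod q => s ^ 2 - s + 1 = 0)]
    congr 1
    · rw [Finset.sum_congr rfl (fun s hs => by
        rw [my_fiber_card q hq7, if_pos (Finset.mem_filter.mp hs).2]),
        Finset.sum_const, smul_eq_mul, mul_one]
    · rw [← Finset.sum_filter_add_sum_filter_not _ (fun s : ZMod q => IsSquare (s ^ 2 - s + 1))]
      have e2 : ∑ s ∈ (Finset.univ.filter fun s : ZMod q => ¬s ^ 2 - s + 1 = 0).filter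
            (fun s => ¬IsSquare (s ^ 2 - s + 1)),
          (Finset.univ.filter fun y : ZMod q => y ^ 2 = s ^ 2 - s + 1).card = 0 := by
        apply Finset.sum_eq_zero
        intro s hs
        simp only [Finset.mem_filter] at hs
        rw [my_fiber_card q hq7, if_neg hs.1.2, if_neg hs.2]
      rw [e2, add_zero]
      rw [Finset.sum_congr rfl (fun s hs => by
        simp only [Finset.mem_filter] at hs
        rw [my_fiber_card q hq7, if_neg hs.1.2, if_pos hs.2]),
        Finset.sum_const, smul_eq_mul]
      rw [Finset.filter_filter, hN2def, mul_comm]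
  -- target card = N2 - 2
  have hmem0 : (0 : ZMod q) ∈ Finset.univ.filter fun s : ZMod q =>
      s ^ 2 - s + 1 ≠ 0 ∧ IsSquare (s ^ 2 - s + 1) := by
    simp only [Finset.mem_filter, Finset.mem_univ, true_and]
    norm_num
  have hmem1 : (1 : ZMod q) ∈ (Finset.univ.filter fun s : ZMod q =>
      s ^ 2 - s + 1 ≠ 0 ∧ IsSquare (s ^ 2 - s + 1)).erase 0 := by
    simp only [Finset.mem_erase, Finset.mem_filter, Finset.mem_univ, true_and]
    refine ⟨h10, ?_, ?_⟩ <;> norm_num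
  have htarget : (Finset.univ.filter fun s : ZMod q =>
        s ≠ 0 ∧ s ≠ 1 ∧ s ^ 2 - s + 1 ≠ 0 ∧ IsSquare (s ^ 2 - s + 1)).card
      = N2 - 1 - 1 := by
    rw [show (Finset.univ.filter fun s : ZMod q =>
        s ≠ 0 ∧ s ≠ 1 ∧ s ^ 2 - s + 1 ≠ 0 ∧ IsSquare (s ^ 2 - s + 1))
        = ((Finset.univ.filter fun s : ZMod q =>
          s ^ 2 - s + 1 ≠ 0 ∧ IsSquare (s ^ 2 - s + 1)).erase 0).erase 1 by
      ext s
      simp only [Finset.mem_erase, Finset.mem_filter, Finset.mem_univ, true_and]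
      tauto]
    rw [Finset.card_erase_of_mem hmem1, Finset.card_erase_of_mem hmem0, hN2def]
  have hzc := my_zero_card q hq7
  rw [htarget]
  split_ifs at hzc ⊢ with hsq
  · rw [hzc] at key; omega
  · rw [hzc] at key; omega
end

section
/- Let q be a prime with q ≥ 7. Define H₂(r,s) = r² + (6s² − 4s³ − 4s)·r + s⁴ over F_q. Then the set 𝔓 = {(r,s) ∈ F_q² : H₂(r,s) = 0, r ∉ {0,1}, s ∉ {0,1}} has cardinality q − 5. -/
open scoped Classical in
/-- For a prime `q ≥ 7`, the set of pairs `(r,s)` with `r,s ∉ {0,1}` and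
`H₂(r,s) = r² + (6s² - 4s³ - 4s)r + s⁴ = 0` has cardinality `q - 5`. -/
theorem stmt3 (q : ℕ) [Fact q.Prime] (hq7 : 7 ≤ q) :
    (Finset.univ.filter fun p : ZMod q × ZMod q =>
        p.1 ^ 2 + (6 * p.2 ^ 2 - 4 * p.2 ^ 3 - 4 * p.2) * p.1 + p.2 ^ 4 = 0 ∧
          p.1 ≠ 0 ∧ p.1 ≠ 1 ∧ p.2 ≠ 0 ∧ p.2 ≠ 1).card = q - 5 := by
  have hchar : ∀ n : ℕ, n ≠ 0 → n < 7 → (n : ZMod q) ≠ 0 := by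
    intro n hn h7 h0
    have h1 := (ZMod.natCast_eq_zero_iff n q).mp h0
    have := Nat.le_of_dvd (Nat.pos_of_ne_zero hn) h1
    omega
  have h2 : (2 : ZMod q) ≠ 0 := by
    have := hchar 2 (by norm_num) (by norm_num); exact_mod_cast this
  have h3 : (3 : ZMod q) ≠ 0 := by
    have := hchar 3 (by norm_num) (by norm_num); exact_mod_cast this
  have h4 : (4 : ZMod q) ≠ 0 := by
    intro h; exact h2 (by
      rcases mul_eq_zero.mp (show (2:ZMod q) * 2 = 0 by linear_combination h) with h | h <;> exact h)
  have i2 : (2 : ZMod q)⁻¹ * 2 = 1 := inv_mul_cancel₀ h2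
  set B : Finset (ZMod q) := {0, 1, -1, -2, -(2:ZMod q)⁻¹} with hBdef
  have hmemB : ∀ t : ZMod q, t ∈ B ↔ (t = 0 ∨ t = 1 ∨ t = -1 ∨ t = -2 ∨ t = -(2:ZMod q)⁻¹) := by
    intro t; simp [hBdef]
  have hBcard : B.card = 5 := by
    have d1 : (1:ZMod q) ≠ -1 := fun h => h2 (by linear_combination h)
    have d2 : (1:ZMod q) ≠ -2 := fun h => h3 (by linear_combination h)
    have d3 : (1:ZMod q) ≠ -(2:ZMod q)⁻¹ := fun h => h3 (by linear_combination 2*h - i2)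
    have d4 : (-1:ZMod q) ≠ -2 := fun h => h2 (by linear_combination 2*h)
    have d5 : (-1:ZMod q) ≠ -(2:ZMod q)⁻¹ := fun h => h2 (by linear_combination -4*h + 2*i2)
    have d6 : (-2:ZMod q) ≠ -(2:ZMod q)⁻¹ := fun h => h3 (by linear_combination -2*h + i2)
    have d7 : (0:ZMod q) ≠ 1 := fun h => h2 (by linear_combination -2*h)
    have d8 : (0:ZMod q) ≠ -1 := fun h => h2 (by linear_combination 2*h)
    have d9 : (0:ZMod q) ≠ -2 := fun h => h2 (by linear_combination h)
    have d10 : (0:ZMod q) ≠ -(2:ZMod q)⁻¹ := fun h => h2 (by linear_combination 4*h - 2*i2)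
    rw [hBdef]
    rw [Finset.card_insert_of_notMem (by simp [d7, d8, d9, d10]),
        Finset.card_insert_of_notMem (by simp [d1, d2, d3]),
        Finset.card_insert_of_notMem (by simp [d4, d5]),
        Finset.card_insert_of_notMem (by simp [d6]),
        Finset.card_singleton]
  have hcard : (Finset.univ \ B).card = q - 5 := by
    rw [Finset.card_sdiff_of_subset (Finset.subset_univ B), hBcard, Finset.card_univ, ZMod.card]
  rw [← hcard]
  apply Finset.card_bij'
    (i := fun p _ => (p.1 - p.2 ^ 2) / (2 * p.2 * (p.2 - 1)))
    (j := fun t _ => (((t^2 + 2*t)/(2*t+1)) * t^2, (t^2 + 2*t)/(2*t+1)))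
  · -- left inverse
    rintro ⟨r, s⟩ hp
    simp only [Finset.mem_filter, Finset.mem_univ, true_and] at hp
    obtain ⟨hH, hr0, hr1, hs0, hs1⟩ := hp
    simp only at hH hr0 hr1 hs0 hs1 ⊢
    have hs1' : s - 1 ≠ 0 := sub_ne_zero.mpr hs1
    have hden : 2 * s * (s - 1) ≠ 0 := mul_ne_zero (mul_ne_zero h2 hs0) hs1'
    set t := (r - s ^ 2) / (2 * s * (s - 1)) with htdef
    have htden : t * (2 * s * (s - 1)) = r - s ^ 2 := div_mul_cancel₀ _ hden
    have expand : (t * (2 * s * (s-1)))^2 = (r - s^2)^2 := by rw [htden]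
    have hrs : r ≠ s := by
      intro h
      rw [h] at hH
      have : (3:ZMod q) * (s * (s-1))^2 = 0 := by linear_combination -hH
      rcases mul_eq_zero.mp this with h' | h'
      · exact h3 h'
      · exact hden (by have h'' := pow_eq_zero_iff (n := 2) (by norm_num) |>.mp h'
                       linear_combination 2*h'')
    have hkey : s * (2 * t + 1) = t ^ 2 + 2 * t := by
      have e : (t^2 + 2*t - s*(2*t+1)) * (2*s*(s-1))^2 = 0 := by
        linear_combination expand + ((2 - 2*s)*(2*s*(s-1)))*htden + hH
      rcases mul_eq_zero.mp e with h' | h'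
      · linear_combination -h'
      · exact absurd (pow_eq_zero_iff (n := 2) (by norm_num) |>.mp h') hden
    have hts : (2*t+1) * (s*(s-1)) = r - s := by linear_combination htden
    have h2t1 : 2*t + 1 ≠ 0 := by
      intro h
      apply hrs
      apply sub_eq_zero.mp
      rw [← hts, h, zero_mul]
    have hscomp : (t^2 + 2*t)/(2*t+1) = s := by
      rw [div_eq_iff h2t1]
      linear_combination -hkey
    have hrcomp : ((t^2 + 2*t)/(2*t+1)) * t^2 = r := by
      rw [hscomp]
      have e : (s * t^2 - r) * (2*s*(s-1))^2 = 0 := by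
        linear_combination s*expand + s*hH
      rcases mul_eq_zero.mp e with h' | h'
      · linear_combination h'
      · exact absurd (pow_eq_zero_iff (n := 2) (by norm_num) |>.mp h') hden
    rw [Prod.ext_iff]
    exact ⟨hrcomp, hscomp⟩
  · -- right inverse
    intro t ht
    rw [Finset.mem_sdiff, hmemB] at ht
    obtain ⟨-, ht⟩ := ht
    push_neg at ht
    obtain ⟨ht0, ht1, htm1, htm2, htinv⟩ := ht
    have hden : 2*t + 1 ≠ 0 := fun h => htinv (by linear_combination (2:ZMod q)⁻¹*h - t*i2)
    have hs0 : (t^2 + 2*t)/(2*t+1) ≠ 0 := by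
      intro h
      rcases div_eq_zero_iff.mp h with h' | h'
      · have : t * (t + 2) = 0 := by linear_combination h'
        rcases mul_eq_zero.mp this with h'' | h''
        · exact ht0 h''
        · exact htm2 (by linear_combination h'')
      · exact hden h'
    have hs1 : (t^2 + 2*t)/(2*t+1) - 1 ≠ 0 := by
      intro h
      have h' : (t^2 + 2*t)/(2*t+1) = 1 := by linear_combination h
      have h'' := (div_eq_one_iff_eq hden).mp h'
      have : (t - 1) * (t + 1) = 0 := by linear_combination h''
      rcases mul_eq_zero.mp this with h3' | h3'
      · exact ht1 (by linear_combination h3')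
      · exact htm1 (by linear_combination h3')
    have hsmul : ((t^2+2*t)/(2*t+1)) * (2*t+1) = t^2+2*t := div_mul_cancel₀ _ hden
    simp only
    rw [div_eq_iff (mul_ne_zero (mul_ne_zero h2 hs0) hs1)]
    linear_combination (-((t^2+2*t)/(2*t+1))) * hsmul
  · -- hi : parameter lies in univ \ B
    rintro ⟨r, s⟩ hp
    simp only [Finset.mem_filter, Finset.mem_univ, true_and] at hp
    obtain ⟨hH, hr0, hr1, hs0, hs1⟩ := hp
    simp only at hH hr0 hr1 hs0 hs1 ⊢
    have hs1' : s - 1 ≠ 0 := sub_ne_zero.mpr hs1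
    have hden : 2 * s * (s - 1) ≠ 0 := mul_ne_zero (mul_ne_zero h2 hs0) hs1'
    set t := (r - s ^ 2) / (2 * s * (s - 1)) with htdef
    have htden : t * (2 * s * (s - 1)) = r - s ^ 2 := div_mul_cancel₀ _ hden
    have expand : (t * (2 * s * (s-1)))^2 = (r - s^2)^2 := by rw [htden]
    have hrs : r ≠ s := by
      intro h
      rw [h] at hH
      have : (3:ZMod q) * (s * (s-1))^2 = 0 := by linear_combination -hH
      rcases mul_eq_zero.mp this with h' | h'
      · exact h3 h'
      · exact hden (by have h'' := pow_eq_zero_iff (n := 2) (by norm_num) |>.mp h'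
                       linear_combination 2*h'')
    have hrs2 : r - s ^ 2 ≠ 0 := by
      intro h
      have hr : r = s ^ 2 := by linear_combination h
      rw [hr] at hH
      have : (4:ZMod q) * s * (s * (s-1))^2 = 0 := by linear_combination -hH
      rcases mul_eq_zero.mp this with h' | h'
      · rcases mul_eq_zero.mp h' with h'' | h''
        · exact h4 h''
        · exact hs0 h''
      · exact hden (by have h'' := pow_eq_zero_iff (n := 2) (by norm_num) |>.mp h'
                       linear_combination 2*h'')
    have hkey : s * (2 * t + 1) = t ^ 2 + 2 * t := by
      have e : (t^2 + 2*t - s*(2*t+1)) * (2*s*(s-1))^2 = 0 := by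
        linear_combination expand + ((2 - 2*s)*(2*s*(s-1)))*htden + hH
      rcases mul_eq_zero.mp e with h' | h'
      · linear_combination -h'
      · exact absurd (pow_eq_zero_iff (n := 2) (by norm_num) |>.mp h') hden
    have hts : (2*t+1) * (s*(s-1)) = r - s := by linear_combination htden
    rw [Finset.mem_sdiff]
    refine ⟨Finset.mem_univ _, ?_⟩
    rw [hmemB]
    push_neg
    refine ⟨?_, ?_, ?_, ?_, ?_⟩
    · intro h
      exact hrs2 (by linear_combination (2*s*(s-1))*h - htden)
    · intro h
      have h31 : (3:ZMod q) * (s - 1) = 0 := by linear_combination hkey - (2*s - t - 3)*h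
      rcases mul_eq_zero.mp h31 with h' | h'
      · exact h3 h'
      · exact hs1' h'
    · intro h
      exact hs1' (by linear_combination -hkey - (t - 2*s + 1)*h)
    · intro h
      have h3s : (3:ZMod q) * s = 0 := by linear_combination -hkey - (t - 2*s)*h
      rcases mul_eq_zero.mp h3s with h' | h'
      · exact h3 h'
      · exact hs0 h'
    · intro h
      have hr_s : r - s = 0 := by
        linear_combination -hts + 2*s*(s-1)*h - s*(s-1)*i2
      exact hrs (sub_eq_zero.mp hr_s)
  · -- hj : image of parameter is a solution
    intro t ht
    rw [Finset.mem_sdiff, hmemB] at ht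
    obtain ⟨-, ht⟩ := ht
    push_neg at ht
    obtain ⟨ht0, ht1, htm1, htm2, htinv⟩ := ht
    have hden : 2*t + 1 ≠ 0 := fun h => htinv (by linear_combination (2:ZMod q)⁻¹*h - t*i2)
    have hs0 : (t^2 + 2*t)/(2*t+1) ≠ 0 := by
      intro h
      rcases div_eq_zero_iff.mp h with h' | h'
      · have : t * (t + 2) = 0 := by linear_combination h'
        rcases mul_eq_zero.mp this with h'' | h''
        · exact ht0 h''
        · exact htm2 (by linear_combination h'')
      · exact hden h'
    have hs1 : (t^2 + 2*t)/(2*t+1) ≠ 1 := by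
      intro h
      have h' := (div_eq_one_iff_eq hden).mp h
      have : (t - 1) * (t + 1) = 0 := by linear_combination h'
      rcases mul_eq_zero.mp this with h'' | h''
      · exact ht1 (by linear_combination h'')
      · exact htm1 (by linear_combination h'')
    simp only [Finset.mem_filter, Finset.mem_univ, true_and]
    have hsmul : ((t^2+2*t)/(2*t+1)) * (2*t+1) = t^2+2*t := div_mul_cancel₀ _ hden
    refine ⟨?_, ?_, ?_, hs0, hs1⟩
    · set u : ZMod q := (t^2+2*t)/(2*t+1) with hu
      have e : ((u * t^2)^2 + (6*u^2 - 4*u^3 - 4*u) * (u*t^2) + u^4) * (2*t+1)^4 = 0 := by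
        linear_combination (u^2*(2*t + 15*t^2 + 40*t^3 + 40*t^4 - 16*t^6)
          + u^3*(1 + 6*t + 8*t^2 - 16*t^3 - 48*t^4 - 32*t^5)) * hsmul
      rcases mul_eq_zero.mp e with h' | h'
      · exact h'
      · exact absurd (pow_eq_zero_iff (n := 4) (by norm_num) |>.mp h') hden
    · exact mul_ne_zero hs0 (pow_ne_zero 2 ht0)
    · intro h
      rw [div_mul_eq_mul_div, div_eq_one_iff_eq hden] at h
      have : (t - 1) * (t + 1)^3 = 0 := by linear_combination h
      rcases mul_eq_zero.mp this with h'' | h''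
      · exact ht1 (by linear_combination h'')
      · exact htm1 (by linear_combination pow_eq_zero_iff (n := 3) (by norm_num) |>.mp h'')
end

section
/- Over any field of characteristic ≠ 2, for the pencil with A = r·F + G, B = s·F + G where F = y² − xz and G = x² + b y² + c xy + yz (as symmetric 3×3 matrices), the r-discriminant of the quadratic (in r) polynomial H₂ arising from Cayley's criterion factors as δ(s) = 16·(s³ + b s² + c s + 1)² · ((b² − 3c) s² + (bc − 9) s + (c² − 3b)). -/
open Polynomial

/-- The symmetric matrix of the conic `α F + G` where `F = y² - xz` and
`G = x² + b y² + c xy + yz`. -/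
noncomputable def pencilMat (K : Type*) [Field K] (b c α : K) :
    Matrix (Fin 3) (Fin 3) K :=
  Matrix.of ![![1, c / 2, -α / 2], ![c / 2, b + α, 1 / 2], ![-α / 2, 1 / 2, 0]]

/-- `Δ(t) = det (t A + B)` as a polynomial in `t`, where `A`, `B` are the matrices
of the conics `r F + G` and `s F + G`. -/
noncomputable def cayleyDelta (K : Type*) [Field K] (b c r s : K) : K[X] :=
  ((X : K[X]) • (pencilMat K b c r).map C + (pencilMat K b c s).map C).det

section Aux

variable {K : Type*} [Field K]

private lemma tri (a b c d e f : K) :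
    (X * C a + C b) * (X * C c + C d) * (X * C e + C f) =
      C (b * d * f) + C (a * d * f + b * c * f + b * d * e) * X
        + C (a * c * f + a * d * e + b * c * e) * X ^ 2 + C (a * c * e) * X ^ 3 := by
  simp only [C_mul, C_add]
  ring

private lemma tri0 (a b c d e f : K) :
    ((X * C a + C b) * (X * C c + C d) * (X * C e + C f)).coeff 0 = b * d * f := by
  rw [tri]; simp

private lemma tri1 (a b c d e f : K) :
    ((X * C a + C b) * (X * C c + C d) * (X * C e + C f)).coeff 1 =
      a * d * f + b * c * f + b * d * e := by
  rw [tri]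
  simp only [coeff_add, coeff_C_mul, coeff_X_pow, coeff_X, coeff_C]
  norm_num

private lemma tri2 (a b c d e f : K) :
    ((X * C a + C b) * (X * C c + C d) * (X * C e + C f)).coeff 2 =
      a * c * f + a * d * e + b * c * e := by
  rw [tri]
  simp only [coeff_add, coeff_C_mul, coeff_X_pow, coeff_X, coeff_C]
  norm_num

private lemma delta_coeff (b c r s : K) (n : ℕ) :
    (cayleyDelta K b c r s).coeff n =
      ((X * C (1:K) + C 1) * (X * C (b + r) + C (b + s)) * (X * C 0 + C 0)).coeff n
      - ((X * C (1:K) + C 1) * (X * C (1/2 : K) + C (1/2)) * (X * C (1/2 : K) + C (1/2))).coeff n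
      - ((X * C (c/2) + C (c/2)) * (X * C (c/2) + C (c/2)) * (X * C (0:K) + C 0)).coeff n
      + ((X * C (c/2) + C (c/2)) * (X * C (1/2 : K) + C (1/2)) * (X * C (-r/2) + C (-s/2))).coeff n
      + ((X * C (-r/2) + C (-s/2)) * (X * C (c/2) + C (c/2)) * (X * C (1/2 : K) + C (1/2))).coeff n
      - ((X * C (-r/2) + C (-s/2)) * (X * C (b + r) + C (b + s)) * (X * C (-r/2) + C (-s/2))).coeff n := by
  simp only [cayleyDelta, pencilMat, Matrix.det_fin_three, Matrix.add_apply, Matrix.smul_apply,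
    Matrix.map_apply, Matrix.of_apply, Matrix.cons_val', Matrix.cons_val_zero, Matrix.cons_val_one,
    Matrix.head_cons, Matrix.head_fin_const, Matrix.empty_val', Matrix.cons_val_fin_one,
    Matrix.cons_val_two, Matrix.tail_cons, smul_eq_mul, coeff_add, coeff_sub]

end Aux

set_option maxHeartbeats 4000000

/-- For the class (18) pencil with `F = y² - xz`, `G = x² + by² + cxy + yz`, the
Cayley polynomial `H₂` (the suitably normalized `4 d₀ d₂ - d₁²`, where
`Δ(t) = d₀ + d₁ t + d₂ t² + d₃ t³`) is a quadratic `h₀ r² + h₁ r + h₂` in `r`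
with `h₀ = 3s⁴ + 4bs³ + 6cs² + 12s + 4b - c²`, and its `r`-discriminant factors
as `16 (s³ + bs² + cs + 1)² ((b² - 3c)s² + (bc - 9)s + (c² - 3b))`. -/
theorem stmt10 (K : Type*) [Field K] (h2 : (2 : K) ≠ 0) (b c : K) :
    ∃ h₁ h₂ : K → K,
      (∀ r s : K,
          16 * (4 * (cayleyDelta K b c r s).coeff 0 * (cayleyDelta K b c r s).coeff 2
              - (cayleyDelta K b c r s).coeff 1 ^ 2) =
            (3 * s ^ 4 + 4 * b * s ^ 3 + 6 * c * s ^ 2 + 12 * s + 4 * b - c ^ 2) * r ^ 2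
              + h₁ s * r + h₂ s) ∧
      (∀ s : K,
          (h₁ s) ^ 2 -
              4 * (3 * s ^ 4 + 4 * b * s ^ 3 + 6 * c * s ^ 2 + 12 * s + 4 * b - c ^ 2)
                * h₂ s =
            16 * (s ^ 3 + b * s ^ 2 + c * s + 1) ^ 2 *
              ((b ^ 2 - 3 * c) * s ^ 2 + (b * c - 9) * s + (c ^ 2 - 3 * b))) := by
  refine ⟨fun s => 2 * b * s ^ 4 + (4 * b ^ 2 - 4 * c) * s ^ 3 + (6 * b * c - 18) * s ^ 2
      + (4 * c ^ 2 - 4 * b) * s + 2 * c,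
    fun s => (4 * c - b ^ 2) * s ^ 4 + 12 * s ^ 3 + 6 * b * s ^ 2 + 4 * c * s + 3, ?_, ?_⟩
  · intro r s
    rw [delta_coeff, delta_coeff, delta_coeff]
    simp only [tri0, tri1, tri2]
    have hi : (2:K) * (2:K)⁻¹ = 1 := mul_inv_cancel₀ h2
    simp only [div_eq_mul_inv]
    linear_combination ((3:K) + (6:K)*(2:K)⁻¹ + (12:K)*(2:K)⁻¹^2 + (24:K)*(2:K)⁻¹^3 + (12:K)*s^3 + (24:K)*s^3*(2:K)⁻¹ + (48:K)*s^3*(2:K)⁻¹^2 + (96:K)*s^3*(2:K)⁻¹^3 + (-18:K)*r*s^2 + (-36:K)*r*s^2*(2:K)⁻¹ + (-72:K)*r*s^2*(2:K)⁻¹^2 + (-144:K)*r*s^2*(2:K)⁻¹^3 + (12:K)*r^2*s + (24:K)*r^2*s*(2:K)⁻¹ + (48:K)*r^2*s*(2:K)⁻¹^2 + (96:K)*r^2*s*(2:K)⁻¹^3 + (3:K)*r^2*s^4 + (6:K)*r^2*s^4*(2:K)⁻¹ + (12:K)*r^2*s^4*(2:K)⁻¹^2 + (24:K)*r^2*s^4*(2:K)⁻¹^3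 + (4:K)*c*s + (8:K)*c*s*(2:K)⁻¹ + (16:K)*c*s*(2:K)⁻¹^2 + (32:K)*c*s*(2:K)⁻¹^3 + (64:K)*c*s*(2:K)⁻¹^4 + (4:K)*c*s^4 + (8:K)*c*s^4*(2:K)⁻¹ + (16:K)*c*s^4*(2:K)⁻¹^2 + (32:K)*c*s^4*(2:K)⁻¹^3 + (64:K)*c*s^4*(2:K)⁻¹^4 + (2:K)*c*r + (4:K)*c*r*(2:K)⁻¹ + (8:K)*c*r*(2:K)⁻¹^2 + (16:K)*c*r*(2:K)⁻¹^3 + (32:K)*c*r*(2:K)⁻¹^4 + (-4:K)*c*r*s^3 + (-8:K)*c*r*s^3*(2:K)⁻¹ + (-16:K)*c*r*s^3*(2:K)⁻¹^2 + (-32:K)*c*r*s^3*(2:K)⁻¹^3 + (-64:K)*c*r*s^3*(2:K)⁻¹^4 + (6:K)*c*r^2*s^2 + (12:K)*c*r^2*s^2*(2:K)⁻¹ + (24:K)*c*r^2*s^2*(2:K)⁻¹^2 + (48:K)*c*r^2*s^2*(2:K)⁻¹^3 + (96:K)*c*r^2*s^2*(2:K)⁻¹^4 + (4:K)*c^2*r*s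 + (8:K)*c^2*r*s*(2:K)⁻¹ + (16:K)*c^2*r*s*(2:K)⁻¹^2 + (32:K)*c^2*r*s*(2:K)⁻¹^3 + (64:K)*c^2*r*s*(2:K)⁻¹^4 + (128:K)*c^2*r*s*(2:K)⁻¹^5 + (-1:K)*c^2*r^2 + (-2:K)*c^2*r^2*(2:K)⁻¹ + (-4:K)*c^2*r^2*(2:K)⁻¹^2 + (-8:K)*c^2*r^2*(2:K)⁻¹^3 + (-16:K)*c^2*r^2*(2:K)⁻¹^4 + (-32:K)*c^2*r^2*(2:K)⁻¹^5 + (6:K)*b*s^2 + (12:K)*b*s^2*(2:K)⁻¹ + (24:K)*b*s^2*(2:K)⁻¹^2 + (48:K)*b*s^2*(2:K)⁻¹^3 + (-4:K)*b*r*s + (-8:K)*b*r*s*(2:K)⁻¹ + (-16:K)*b*r*s*(2:K)⁻¹^2 + (-32:K)*b*r*s*(2:K)⁻¹^3 + (2:K)*b*r*s^4 + (4:K)*b*r*s^4*(2:K)⁻¹ + (8:K)*b*r*s^4*(2:K)⁻¹^2 + (16:K)*b*r*s^4*(2:K)⁻¹^3 + (4:K)*b*r^2 + (8:K)*b*r^2*(2:K)⁻¹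 + (16:K)*b*r^2*(2:K)⁻¹^2 + (32:K)*b*r^2*(2:K)⁻¹^3 + (4:K)*b*r^2*s^3 + (8:K)*b*r^2*s^3*(2:K)⁻¹ + (16:K)*b*r^2*s^3*(2:K)⁻¹^2 + (32:K)*b*r^2*s^3*(2:K)⁻¹^3 + (6:K)*b*c*r*s^2 + (12:K)*b*c*r*s^2*(2:K)⁻¹ + (24:K)*b*c*r*s^2*(2:K)⁻¹^2 + (48:K)*b*c*r*s^2*(2:K)⁻¹^3 + (96:K)*b*c*r*s^2*(2:K)⁻¹^4 + (-1:K)*b^2*s^4 + (-2:K)*b^2*s^4*(2:K)⁻¹ + (-4:K)*b^2*s^4*(2:K)⁻¹^2 + (-8:K)*b^2*s^4*(2:K)⁻¹^3 + (4:K)*b^2*r*s^3 + (8:K)*b^2*r*s^3*(2:K)⁻¹ + (16:K)*b^2*r*s^3*(2:K)⁻¹^2 + (32:K)*b^2*r*s^3*(2:K)⁻¹^3) * hi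
  · intro s
    ring
end
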